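/- Every circulant density matrix ρ of dimension n = pq is separable in C^p ⊗ C^q. -/

import Mathlib

open Matrix Kronecker
open scoped BigOperators Classical ComplexOrder

noncomputable section

def grho {V : Type*} [Fintype V] [DecidableEq V] (G : SimpleGraph V) : Matrix V V ℂ :=
  ((2 * G.edgeFinset.card : ℂ))⁻¹ • G.lapMatrix ℂ

def degM {V : Type*} [Fintype V] [DecidableEq V] (G : SimpleGraph V) : Matrix V V ℂ :=
  Matrix.diagonal fun v => (G.degree v : ℂ)

def ptB {p q : ℕ} {α : Type*} (A : Matrix (Fin p × Fin q) (Fin p × Fin q) α) :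
    Matrix (Fin p × Fin q) (Fin p × Fin q) α :=
  fun x y => A (x.1, y.2) (y.1, x.2)

def gptB {p q : ℕ} (G : SimpleGraph (Fin p × Fin q)) : SimpleGraph (Fin p × Fin q) where
  Adj x y := G.Adj (x.1, y.2) (y.1, x.2)
  symm := ⟨by intro x y h; exact G.adj_symm h⟩
  loopless := ⟨by intro x h; exact G.irrefl h⟩

def IsDensityMatrix {n : Type*} [Fintype n] [DecidableEq n] (A : Matrix n n ℂ) : Prop :=
  A.PosSemidef ∧ A.trace = 1

def Separable {p q : ℕ} (ρ : Matrix (Fin p × Fin q) (Fin p × Fin q) ℂ) : Prop :=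
  ∃ (m : ℕ) (w : Fin m → ℝ) (σ : Fin m → Matrix (Fin p) (Fin p) ℂ)
    (τ : Fin m → Matrix (Fin q) (Fin q) ℂ),
    (∀ k, 0 ≤ w k) ∧ (∑ k, w k = 1) ∧
    (∀ k, IsDensityMatrix (σ k)) ∧ (∀ k, IsDensityMatrix (τ k)) ∧
    ρ = ∑ k, (w k : ℂ) • (σ k ⊗ₖ τ k)

def proj {n : Type*} (ψ : n → ℂ) : Matrix n n ℂ := vecMulVec ψ (star ψ)

/-! ### Auxiliary lemmas -/

lemma pow_modEq {ω : ℂ} {n : ℕ} (h1 : ω ^ n = 1) {a b : ℕ} (hab : a ≡ b [MOD n]) :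
    ω ^ a = ω ^ b := by
  have h : ∀ c : ℕ, ω ^ c = ω ^ (c % n) := by
    intro c
    conv_lhs => rw [← Nat.div_add_mod c n]
    rw [pow_add, pow_mul, h1, one_pow, one_mul]
  rw [h a, h b, hab]

lemma mul_conj_one {ω : ℂ} {n : ℕ} (hω : IsPrimitiveRoot ω n) (hn : n ≠ 0) (m : ℕ) :
    ω ^ m * (starRingEnd ℂ) (ω ^ m) = 1 := by
  have h1 : ‖ω‖ = 1 := Complex.norm_eq_one_of_pow_eq_one hω.pow_eq_one hn
  have hmc : ω * (starRingEnd ℂ) ω = 1 := by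
    rw [Complex.mul_conj, Complex.normSq_eq_norm_sq, h1]; norm_num
  rw [map_pow, ← mul_pow, hmc, one_pow]

lemma proj_psd {n : Type*} [Fintype n] (ψ : n → ℂ) : (proj ψ).PosSemidef := by
  rw [posSemidef_iff_dotProduct_mulVec]
  constructor
  · ext i j
    simp [proj, vecMulVec, conjTranspose_apply, mul_comm]
  · intro x
    have h : star x ⬝ᵥ (proj ψ).mulVec x = (starRingEnd ℂ) (star ψ ⬝ᵥ x) * (star ψ ⬝ᵥ x) := by
      simp only [proj, dotProduct, mulVec, vecMulVec_apply, dotProduct, Pi.star_apply,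
        _root_.map_mul, map_sum, Finset.mul_sum, Finset.sum_mul, starRingEnd_apply, star_star]
      rw [Finset.sum_comm]
      exact Finset.sum_congr rfl fun i _ => Finset.sum_congr rfl fun j _ => by ring
    rw [h, ← Complex.normSq_eq_conj_mul_self]
    exact_mod_cast Complex.normSq_nonneg _

lemma density_aux {m : ℕ} (hm : m ≠ 0) (ψ : Fin m → ℂ)
    (hψ : ∀ a, ψ a * (starRingEnd ℂ) (ψ a) = 1) :
    IsDensityMatrix ((m:ℂ)⁻¹ • proj ψ) := by
  have hc : (0:ℂ) ≤ (m:ℂ)⁻¹ := by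
    have h1 : (m:ℂ)⁻¹ = (((m:ℝ)⁻¹ : ℝ) : ℂ) := by
      rw [Complex.ofReal_inv]
      norm_num
    rw [h1]
    exact Complex.zero_le_real.mpr (inv_nonneg.mpr (Nat.cast_nonneg m))
  refine ⟨posSemidef_iff_dotProduct_mulVec.mpr ⟨?_, ?_⟩, ?_⟩
  · rw [Matrix.IsHermitian, Matrix.conjTranspose_smul, (proj_psd ψ).1.eq]
    congr 1
    simp
  · intro x
    rw [Matrix.smul_mulVec, dotProduct_smul, smul_eq_mul]
    exact mul_nonneg hc ((proj_psd ψ).dotProduct_mulVec_nonneg x)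
  · rw [Matrix.trace_smul, smul_eq_mul]
    have ht : (proj ψ).trace = (m:ℂ) := by
      simp only [Matrix.trace, Matrix.diag, proj, vecMulVec_apply, Pi.star_apply,
        Complex.star_def, hψ]
      simp
    rw [ht, inv_mul_cancel₀ (Nat.cast_ne_zero.mpr hm)]

lemma fin_sub_char {n : ℕ} (hn : n ≠ 0) (x y j : Fin n) :
    ((n:ℤ) ∣ (x.val:ℤ) - ((j.val:ℤ) + y.val)) ↔ j = x - y := by
  haveI : NeZero n := ⟨hn⟩
  rw [eq_sub_iff_add_eq, Fin.ext_iff, Fin.val_add]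
  have h3 : (j.val + y.val) % n = x.val ↔ (j.val + y.val) ≡ x.val [MOD n] := by
    unfold Nat.ModEq
    rw [Nat.mod_eq_of_lt x.isLt]
  rw [h3, Nat.modEq_iff_dvd]
  push_cast
  ring_nf

lemma sum_char {n : ℕ} {ω : ℂ} (hω : IsPrimitiveRoot ω n) (hn : n ≠ 0) (X Z : ℕ) :
    ∑ k : Fin n, ω ^ (k.val * X) * (starRingEnd ℂ) (ω ^ (k.val * Z)) =
      if ((n:ℤ) ∣ (X:ℤ) - (Z:ℤ)) then (n:ℂ) else 0 := by
  have hne : ω ≠ 0 := hω.ne_zero hn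
  have hmc : ω * (starRingEnd ℂ) ω = 1 := by
    have h1 : ‖ω‖ = 1 := Complex.norm_eq_one_of_pow_eq_one hω.pow_eq_one hn
    rw [Complex.mul_conj, Complex.normSq_eq_norm_sq, h1]; norm_num
  have hconj : (starRingEnd ℂ) ω = ω⁻¹ := eq_inv_of_mul_eq_one_left (by rw [mul_comm]; exact hmc)
  set ζ : ℂ := ω ^ ((X:ℤ) - Z) with hζ
  have hterm : ∀ k : ℕ, ω ^ (k * X) * (starRingEnd ℂ) (ω ^ (k * Z)) = ζ ^ k := by
    intro k
    rw [map_pow, hconj, hζ, ← zpow_natCast ω (k * X), ← zpow_natCast ω⁻¹ (k * Z),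
      _root_.inv_zpow, ← _root_.zpow_neg, ← zpow_add₀ hne,
      ← zpow_natCast (ω ^ ((X:ℤ) - Z)) k, ← _root_.zpow_mul]
    congr 1
    push_cast
    ring
  simp only [hterm]
  rw [Fin.sum_univ_eq_sum_range (fun k => ζ ^ k) n]
  by_cases hdvd : (n:ℤ) ∣ (X:ℤ) - Z
  · have : ζ = 1 := (hω.zpow_eq_one_iff_dvd _).mpr hdvd
    simp [this, hdvd]
  · have hζ1 : ζ ≠ 1 := fun h => hdvd ((hω.zpow_eq_one_iff_dvd _).mp h)
    have hζn : ζ ^ n = 1 := by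
      rw [hζ, ← zpow_natCast (ω ^ ((X:ℤ) - Z)) n, ← _root_.zpow_mul, mul_comm, _root_.zpow_mul,
        zpow_natCast, hω.pow_eq_one, _root_.one_zpow]
    rw [geom_sum_eq hζ1, hζn]
    simp [hdvd]

lemma key_sum {n : ℕ} {ω : ℂ} (hω : IsPrimitiveRoot ω n) (hn : n ≠ 0) (v : Fin n → ℂ)
    (X Y : Fin n) :
    ∑ k : Fin n, (∑ j : Fin n, v j * (starRingEnd ℂ) (ω ^ (k.val * j.val))) *
      ((n:ℂ)⁻¹ * (ω ^ (k.val * X.val) * (starRingEnd ℂ) (ω ^ (k.val * Y.val)))) = v (X - Y) := by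
  haveI : NeZero n := ⟨hn⟩
  have step1 : ∀ k : Fin n, (∑ j : Fin n, v j * (starRingEnd ℂ) (ω ^ (k.val * j.val))) *
      ((n:ℂ)⁻¹ * (ω ^ (k.val * X.val) * (starRingEnd ℂ) (ω ^ (k.val * Y.val)))) =
      ∑ j : Fin n, v j * (n:ℂ)⁻¹ *
        (ω ^ (k.val * X.val) * (starRingEnd ℂ) (ω ^ (k.val * (j.val + Y.val)))) := by
    intro k
    rw [Finset.sum_mul]
    refine Finset.sum_congr rfl fun j _ => ?_
    rw [Nat.mul_add, pow_add, _root_.map_mul]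
    ring
  simp only [step1]
  rw [Finset.sum_comm]
  have step2 : ∀ j : Fin n, ∑ k : Fin n, v j * (n:ℂ)⁻¹ *
      (ω ^ (k.val * X.val) * (starRingEnd ℂ) (ω ^ (k.val * (j.val + Y.val)))) =
      if j = X - Y then v j * ((n:ℂ)⁻¹ * n) else 0 := by
    intro j
    rw [← Finset.mul_sum, sum_char hω hn X.val (j.val + Y.val)]
    have hiff : ((n:ℤ) ∣ (X.val:ℤ) - ((j.val:ℕ) + (Y.val:ℕ) : ℕ)) ↔ j = X - Y := by
      rw [← fin_sub_char hn X Y j]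
      push_cast
      ring_nf
    by_cases hj : j = X - Y
    · rw [if_pos (hiff.mpr hj), if_pos hj]; ring
    · rw [if_neg (fun h => hj (hiff.mp h)), if_neg hj, mul_zero]
  simp only [step2]
  rw [Finset.sum_ite_eq' Finset.univ (X - Y) (fun j => v j * ((n:ℂ)⁻¹ * n))]
  have hnne : (n:ℂ) ≠ 0 := Nat.cast_ne_zero.mpr hn
  simp [inv_mul_cancel₀ hnne]

lemma form_eq {n : ℕ} {ω : ℂ} (hω : IsPrimitiveRoot ω n) (hn : n ≠ 0) (v : Fin n → ℂ) (k : ℕ) :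
    star (fun x : Fin n => ω ^ (k * x.val)) ⬝ᵥ
      (Matrix.circulant v).mulVec (fun x : Fin n => ω ^ (k * x.val)) =
    (n:ℂ) * ∑ j : Fin n, v j * (starRingEnd ℂ) (ω ^ (k * j.val)) := by
  haveI : NeZero n := ⟨hn⟩
  have hchar : ∀ (x y : Fin n), ω ^ (k * (x - y).val) * ω ^ (k * y.val) = ω ^ (k * x.val) := by
    intro x y
    rw [← pow_add, ← Nat.mul_add]
    refine pow_modEq hω.pow_eq_one (Nat.ModEq.mul_left k ?_)
    have hxy : (x - y) + y = x := sub_add_cancel x y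
    unfold Nat.ModEq
    rw [Nat.mod_eq_of_lt x.isLt, ← Fin.val_add, hxy]
  have hcancel : ∀ (x y : Fin n),
      ω ^ (k * y.val) * (starRingEnd ℂ) (ω ^ (k * x.val)) =
        (starRingEnd ℂ) (ω ^ (k * (x - y).val)) := by
    intro x y
    have h := congrArg (starRingEnd ℂ) (hchar x y)
    rw [_root_.map_mul] at h
    calc ω ^ (k * y.val) * (starRingEnd ℂ) (ω ^ (k * x.val))
        = ω ^ (k * y.val) *
          ((starRingEnd ℂ) (ω ^ (k * (x - y).val)) * (starRingEnd ℂ) (ω ^ (k * y.val))) := by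
          rw [h]
      _ = (starRingEnd ℂ) (ω ^ (k * (x - y).val)) *
          (ω ^ (k * y.val) * (starRingEnd ℂ) (ω ^ (k * y.val))) := by ring
      _ = _ := by rw [mul_conj_one hω hn, mul_one]
  calc star (fun x : Fin n => ω ^ (k * x.val)) ⬝ᵥ
      (Matrix.circulant v).mulVec (fun x => ω ^ (k * x.val))
      = ∑ x : Fin n, ∑ y : Fin n,
          v (x - y) * (ω ^ (k * y.val) * (starRingEnd ℂ) (ω ^ (k * x.val))) := by
        simp only [dotProduct, mulVec, Pi.star_apply, Matrix.circulant_apply, Finset.mul_sum]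
        refine Finset.sum_congr rfl fun x _ => Finset.sum_congr rfl fun y _ => ?_
        simp only [starRingEnd_apply]
        ring
    _ = ∑ x : Fin n, ∑ y : Fin n, v (x - y) * (starRingEnd ℂ) (ω ^ (k * (x - y).val)) := by
        simp only [hcancel]
    _ = ∑ _x : Fin n, ∑ j : Fin n, v j * (starRingEnd ℂ) (ω ^ (k * j.val)) := by
        refine Finset.sum_congr rfl fun x _ => ?_
        exact Fintype.sum_equiv (Equiv.subLeft x) _ _ (fun y => by simp)
    _ = (n:ℂ) * ∑ j, v j * (starRingEnd ℂ) (ω ^ (k * j.val)) := by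
        rw [Finset.sum_const, Finset.card_univ, Fintype.card_fin, nsmul_eq_mul]

theorem stmt18 (p q : ℕ) (v : Fin (p * q) → ℂ)
    (hpsd : (Matrix.circulant v).PosSemidef)
    (htr : (Matrix.circulant v).trace = 1) :
    Separable (Matrix.reindex finProdFinEquiv.symm finProdFinEquiv.symm
      (Matrix.circulant v)) := by
  classical
  by_cases hn0 : p * q = 0
  · exfalso
    haveI : IsEmpty (Fin (p * q)) := by rw [hn0]; exact Fin.isEmpty
    rw [Matrix.trace] at htr
    simp at htr
  have hn : p * q ≠ 0 := hn0
  have hp : p ≠ 0 := fun h => hn (by simp [h])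
  have hq : q ≠ 0 := fun h => hn (by simp [h])
  haveI : NeZero (p * q) := ⟨hn⟩
  set ω : ℂ := Complex.exp (2 * Real.pi * Complex.I / (p * q)) with hωdef
  have hω : IsPrimitiveRoot ω (p * q) := by
    have := Complex.isPrimitiveRoot_exp (p * q) hn
    convert this using 2
    push_cast
    ring
  -- the eigenvalues
  set lam : Fin (p * q) → ℂ :=
    fun k => ∑ j : Fin (p * q), v j * (starRingEnd ℂ) (ω ^ (k.val * j.val)) with hlamdef
  have hlam_props : ∀ k : Fin (p * q), 0 ≤ (lam k).re ∧ ((lam k).re : ℂ) = lam k := by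
    intro k
    have h0 := hpsd.dotProduct_mulVec_nonneg (fun x : Fin (p * q) => ω ^ (k.val * x.val))
    rw [show ((Matrix.circulant v) *ᵥ fun x : Fin (p*q) => ω ^ (k.val * x.val)) =
      (Matrix.circulant v).mulVec (fun x : Fin (p*q) => ω ^ (k.val * x.val)) from rfl] at h0
    rw [form_eq hω hn v k.val] at h0
    rw [Complex.le_def] at h0
    simp only [Complex.zero_re, Complex.zero_im, Complex.mul_re, Complex.mul_im,
      Complex.natCast_re, Complex.natCast_im] at h0
    have hNpos : (0:ℝ) < (p * q : ℕ) := by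
      exact_mod_cast Nat.pos_of_ne_zero hn
    simp only [hlamdef]
    constructor
    · nlinarith [h0.1]
    · have him : (∑ j : Fin (p * q), v j * (starRingEnd ℂ) (ω ^ (k.val * j.val))).im = 0 := by
        nlinarith [h0.2]
      exact Complex.ext (by rw [Complex.ofReal_re]) (by rw [Complex.ofReal_im]; exact him.symm)
  have hsum : ∑ k : Fin (p * q), lam k = 1 := by
    have htr' : ((p * q : ℕ):ℂ) * v 0 = 1 := by
      rw [Matrix.trace] at htr
      simpa [Matrix.diag, Matrix.circulant_apply, sub_self, Finset.sum_const,
        Finset.card_univ, nsmul_eq_mul] using htr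
    calc ∑ k : Fin (p * q), lam k
        = ∑ j : Fin (p * q), ∑ k : Fin (p * q),
            v j * (starRingEnd ℂ) (ω ^ (k.val * j.val)) := Finset.sum_comm
      _ = ∑ j : Fin (p * q), v j *
            ∑ k : Fin (p * q), ω ^ (k.val * 0) * (starRingEnd ℂ) (ω ^ (k.val * j.val)) := by
          refine Finset.sum_congr rfl fun j _ => ?_
          rw [Finset.mul_sum]
          exact Finset.sum_congr rfl fun k _ => by rw [Nat.mul_zero, pow_zero, one_mul]
      _ = ∑ j : Fin (p * q), v j *
            (if (((p*q:ℕ)):ℤ) ∣ ((0:ℕ):ℤ) - (j.val:ℤ) then ((p*q:ℕ):ℂ) else 0) := by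
          exact Finset.sum_congr rfl fun j _ => by rw [sum_char hω hn 0 j.val]
      _ = v 0 * ((p*q:ℕ):ℂ) := by
          rw [Finset.sum_eq_single (0 : Fin (p * q))]
          · simp
          · intro j _ hj
            have hnd : ¬ ((((p*q:ℕ)):ℤ) ∣ ((0:ℕ):ℤ) - (j.val:ℤ)) := by
              intro hd
              apply hj
              rw [Nat.cast_zero, zero_sub, Int.dvd_neg] at hd
              have h2 : (p*q) ∣ j.val := Int.natCast_dvd_natCast.mp hd
              exact Fin.ext (Nat.eq_zero_of_dvd_of_lt h2 j.isLt)
            rw [if_neg hnd, mul_zero]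
          · intro h; exact absurd (Finset.mem_univ _) h
      _ = 1 := by rw [mul_comm]; exact htr'
  refine ⟨p * q, fun k => (lam k).re,
    fun k => (p:ℂ)⁻¹ • proj (fun a : Fin p => ω ^ (k.val * (q * a.val))),
    fun k => (q:ℂ)⁻¹ • proj (fun b : Fin q => ω ^ (k.val * b.val)),
    fun k => (hlam_props k).1, ?_, ?_, ?_, ?_⟩
  · rw [← Complex.re_sum, hsum, Complex.one_re]
  · intro k
    exact density_aux hp _ (fun a => mul_conj_one hω hn _)
  · intro k
    exact density_aux hq _ (fun b => mul_conj_one hω hn _)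
  · ext x y
    obtain ⟨a, b⟩ := x
    obtain ⟨a', b'⟩ := y
    rw [Matrix.reindex_apply, Matrix.submatrix_apply, Equiv.symm_symm, Matrix.circulant_apply,
      Matrix.sum_apply]
    rw [show v (finProdFinEquiv (a, b) - finProdFinEquiv (a', b')) =
      ∑ k : Fin (p * q), (∑ j : Fin (p * q), v j * (starRingEnd ℂ) (ω ^ (k.val * j.val))) *
        (((p*q:ℕ):ℂ)⁻¹ * (ω ^ (k.val * (finProdFinEquiv (a, b)).val) *
          (starRingEnd ℂ) (ω ^ (k.val * (finProdFinEquiv (a', b')).val)))) from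
      (key_sum hω hn v _ _).symm]
    refine Finset.sum_congr rfl fun k _ => ?_
    simp only [Matrix.smul_apply, Matrix.kroneckerMap_apply, proj, vecMulVec_apply,
      Pi.star_apply, Complex.star_def, smul_eq_mul]
    rw [(hlam_props k).2]
    simp only [hlamdef]
    rw [finProdFinEquiv_apply_val (a, b), finProdFinEquiv_apply_val (a', b')]
    rw [Nat.mul_add, Nat.mul_add, pow_add, pow_add, _root_.map_mul]
    have hpq : ((p:ℂ))⁻¹ * ((q:ℂ))⁻¹ = ((p*q:ℕ):ℂ)⁻¹ := by
      rw [← mul_inv]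
      push_cast
      ring
    rw [← hpq]
    ring
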